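/- Let q ≥ 2, d ≥ 2, n a positive integer, and suppose V is a positive integer with q^V ≥ (q/(q-1)) · n^{2d} · f_d(V). Then the number of V-boxes unique arrays in Σ_q^{[n]^d} is at least q^(n^d − 1). In particular, for V = 2d log_q(n) + ((d-1)/d) log_q(log_q n) + O(1) and n large enough, red(DA_{d,q}(n,V)) ≤ 1. -/
import Mathlib


/-- A `d`-dimensional box with side lengths `x` is a minimal `V`-box. -/
def IsMinBox (d V : ℕ) (x : Fin d → ℕ) : Prop :=
  (∀ i, 1 ≤ x i) ∧ V ≤ ∏ i, x i ∧
  ∀ y : Fin d → ℕ, (∀ i, 1 ≤ y i) → (∀ i, y i ≤ x i) → y ≠ x → ∏ i, y i < V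

/-- `f_d(V)`, the number of minimal `d`-dimensional `V`-boxes. -/
noncomputable def numMinBoxes (d V : ℕ) : ℕ :=
  Nat.card {x : Fin d → ℕ // IsMinBox d V x}

/-- `W` contains two identical boxes of side lengths `s` at distinct positions
`u, v ∈ ℕ^d`. -/
def identicalBoxesAt (n d q : ℕ) (W : (Fin d → Fin n) → Fin q)
    (u v s : Fin d → ℕ) : Prop :=
  u ≠ v ∧ (∀ i, 1 ≤ s i) ∧ (∀ i, u i + s i ≤ n) ∧ (∀ i, v i + s i ≤ n) ∧
  ∀ (x y : Fin d → Fin n) (off : Fin d → ℕ), (∀ i, off i < s i) →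
    (∀ i, (x i : ℕ) = u i + off i) → (∀ i, (y i : ℕ) = v i + off i) → W x = W y

open Finset

lemma exists_minbox (d V : ℕ) (s : Fin d → ℕ) (hs1 : ∀ i, 1 ≤ s i)
    (hsV : V ≤ ∏ i, s i) : ∃ a : Fin d → ℕ, (∀ i, a i ≤ s i) ∧ IsMinBox d V a := by
  obtain ⟨m, hm⟩ : ∃ m, ∑ i, s i ≤ m := ⟨_, le_refl _⟩
  induction m generalizing s with
  | zero =>
    refine ⟨s, fun i => le_refl _, hs1, hsV, fun y hy1 hys hne => ?_⟩
    exfalso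
    have : (0:ℕ) < ∑ i, s i ∨ d = 0 := by
      rcases Nat.eq_zero_or_pos d with h | h
      · exact Or.inr h
      · haveI : Nonempty (Fin d) := Fin.pos_iff_nonempty.mp h
        exact Or.inl (Finset.sum_pos (fun i _ => hs1 i) Finset.univ_nonempty)
    rcases this with h | h
    · omega
    · exact hne (funext fun i => absurd i.2 (by omega))
  | succ m ih =>
    by_cases h : IsMinBox d V s
    · exact ⟨s, fun i => le_refl _, h⟩
    · have : ∃ y : Fin d → ℕ, (∀ i, 1 ≤ y i) ∧ (∀ i, y i ≤ s i) ∧ y ≠ s ∧ V ≤ ∏ i, y i := by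
        by_contra hc
        push_neg at hc
        exact h ⟨hs1, hsV, fun y h1 h2 h3 => hc y h1 h2 h3⟩
      obtain ⟨y, hy1, hys, hne, hyV⟩ := this
      have hlt : ∑ i, y i < ∑ i, s i := by
        obtain ⟨i0, hi0⟩ : ∃ i, y i < s i := by
          by_contra hc; push_neg at hc
          exact hne (funext fun i => le_antisymm (hys i) (hc i))
        exact Finset.sum_lt_sum (fun i _ => hys i) ⟨i0, Finset.mem_univ _, hi0⟩
      obtain ⟨a, has, ha⟩ := ih y hy1 hyV (by omega)
      exact ⟨a, fun i => le_trans (has i) (hys i), ha⟩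

lemma minbox_le (d V : ℕ) (hV : 1 ≤ V) (x : Fin d → ℕ) (hx : IsMinBox d V x) :
    ∀ i, x i ≤ V := by
  intro i
  by_contra hc
  push_neg at hc
  obtain ⟨h1, h2, h3⟩ := hx
  have := h3 (Function.update x i (x i - 1))
    (fun j => by rcases eq_or_ne j i with rfl | h
                 · simp; omega
                 · simpa [Function.update_of_ne h] using h1 j)
    (fun j => by rcases eq_or_ne j i with rfl | h
                 · simp
                 · simp [Function.update_of_ne h])
    (by intro h; have h2 := congrFun h i; rw [Function.update_self] at h2; omega)
  have hge : x i - 1 ≤ ∏ j, Function.update x i (x i - 1) j := by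
    calc x i - 1 = Function.update x i (x i - 1) i := by simp
    _ ≤ _ := Finset.single_le_prod' (fun j _ => by
        rcases eq_or_ne j i with rfl | h
        · simp; omega
        · simpa [Function.update_of_ne h] using h1 j) (Finset.mem_univ i)
  omega

lemma minbox_finite (d V : ℕ) (hV : 1 ≤ V) : {x : Fin d → ℕ | IsMinBox d V x}.Finite := by
  apply Set.Finite.subset (Set.Finite.pi (fun i : Fin d => Set.finite_Iic V))
  intro x hx
  simp only [Set.mem_pi, Set.mem_univ, Set.mem_Iic, forall_true_left]
  intro i
  exact minbox_le d V hV x hx i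

/-- The box `v + [0,a)` inside `Fin d → Fin n`. -/
def boxSet (n d : ℕ) (v a : Fin d → ℕ) : Finset (Fin d → Fin n) :=
  Finset.univ.filter (fun x => ∀ i, v i ≤ (x i : ℕ) ∧ (x i : ℕ) < v i + a i)

lemma boxSet_card (n d : ℕ) (v a : Fin d → ℕ) (hv : ∀ i, v i + a i ≤ n) :
    (boxSet n d v a).card = ∏ i, a i := by
  have : boxSet n d v a =
      Fintype.piFinset (fun i => Finset.univ.filter
        (fun t : Fin n => v i ≤ (t : ℕ) ∧ (t : ℕ) < v i + a i)) := by
    ext x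
    simp [boxSet, Fintype.mem_piFinset]
  rw [this, Fintype.card_piFinset]
  refine Finset.prod_congr rfl (fun i _ => ?_)
  have himg : (Finset.univ.filter
      (fun t : Fin n => v i ≤ (t : ℕ) ∧ (t : ℕ) < v i + a i)).image (Fin.val)
      = Finset.Ico (v i) (v i + a i) := by
    ext m
    simp only [Finset.mem_image, Finset.mem_filter, Finset.mem_univ, true_and,
      Finset.mem_Ico]
    constructor
    · rintro ⟨t, ht, rfl⟩; exact ht
    · rintro ⟨h1, h2⟩; exact ⟨⟨m, by have := hv i; omega⟩, ⟨h1, h2⟩, rfl⟩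
  have := congrArg Finset.card himg
  rw [Finset.card_image_of_injective _ Fin.val_injective, Nat.card_Ico] at this
  omega

/-- Two arrays agreeing outside the `v`-box and both having identical `u`/`v`
boxes are equal. -/
lemma eq_of_agree_outside (n d q : ℕ) (u v a : Fin d → ℕ) (i0 : Fin d)
    (hlt : u i0 < v i0) (hu : ∀ i, u i + a i ≤ n)
    (W W' : (Fin d → Fin n) → Fin q)
    (hW : ∀ (x y : Fin d → Fin n) (off : Fin d → ℕ), (∀ i, off i < a i) →
      (∀ i, (x i : ℕ) = u i + off i) → (∀ i, (y i : ℕ) = v i + off i) → W x = W y)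
    (hW' : ∀ (x y : Fin d → Fin n) (off : Fin d → ℕ), (∀ i, off i < a i) →
      (∀ i, (x i : ℕ) = u i + off i) → (∀ i, (y i : ℕ) = v i + off i) → W' x = W' y)
    (hagree : ∀ x : Fin d → Fin n, x ∉ boxSet n d v a → W x = W' x) :
    W = W' := by
  have key : ∀ k, ∀ x : Fin d → Fin n, (x i0 : ℕ) ≤ k → W x = W' x := by
    intro k
    induction k with
    | zero =>
      intro x hx
      apply hagree
      simp only [boxSet, Finset.mem_filter, Finset.mem_univ, true_and]
      push_neg
      exact ⟨i0, fun h => by omega⟩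
    | succ k ih =>
      intro x hx
      by_cases hmem : x ∈ boxSet n d v a
      · simp only [boxSet, Finset.mem_filter, Finset.mem_univ, true_and] at hmem
        set off : Fin d → ℕ := fun i => (x i : ℕ) - v i with hoff
        have hoffa : ∀ i, off i < a i := fun i => by have := hmem i; simp [hoff]; omega
        have hzlt : ∀ i, u i + off i < n := fun i => by have := hu i; have := hoffa i; omega
        set z : Fin d → Fin n := fun i => ⟨u i + off i, hzlt i⟩ with hz
        have hzc : ∀ i, (z i : ℕ) = u i + off i := fun i => rfl
        have hxc : ∀ i, (x i : ℕ) = v i + off i := fun i => by have := hmem i; simp [hoff]; omega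
        have h1 : W z = W x := hW z x off hoffa hzc hxc
        have h2 : W' z = W' x := hW' z x off hoffa hzc hxc
        have hzk : (z i0 : ℕ) ≤ k := by
          have := hmem i0
          have : (z i0 : ℕ) = u i0 + off i0 := rfl
          have hxv : (x i0 : ℕ) = v i0 + off i0 := hxc i0
          omega
        rw [← h1, ← h2]
        exact ih z hzk
      · exact hagree x hmem
  funext x
  exact key (x i0) x (le_refl _)

lemma card_E_core (n d q : ℕ) (u v a : Fin d → ℕ) (i0 : Fin d)
    (hlt : u i0 < v i0) (hu : ∀ i, u i + a i ≤ n) (hv : ∀ i, v i + a i ≤ n)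
    (s : Finset ((Fin d → Fin n) → Fin q))
    (hs : ∀ W ∈ s,
      ∀ (x y : Fin d → Fin n) (off : Fin d → ℕ), (∀ i, off i < a i) →
      (∀ i, (x i : ℕ) = u i + off i) → (∀ i, (y i : ℕ) = v i + off i) → W x = W y) :
    s.card ≤ q ^ (Fintype.card (Fin d → Fin n) - ∏ i, a i) := by
  classical
  set S := boxSet n d v a with hS
  have hcard : Fintype.card {x : Fin d → Fin n // x ∉ S} =
      Fintype.card (Fin d → Fin n) - ∏ i, a i := by
    rw [Fintype.card_subtype_compl, ← boxSet_card n d v a hv]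
    congr 1
    exact Fintype.card_coe S  -- maybe wrong form
  calc _ ≤ (Finset.univ : Finset ({x : Fin d → Fin n // x ∉ S} → Fin q)).card := by
        apply Finset.card_le_card_of_injOn (fun W p => W p.1)
        · intro W _; exact Finset.mem_univ _
        · intro W hW W' hW' heq
          exact eq_of_agree_outside n d q u v a i0 hlt hu W W'
            (hs W (Finset.mem_coe.mp hW)) (hs W' (Finset.mem_coe.mp hW'))
            (fun x hx => congrFun heq ⟨x, hx⟩)
  _ = q ^ (Fintype.card (Fin d → Fin n) - ∏ i, a i) := by
        rw [Finset.card_univ, Fintype.card_fun, hcard, Fintype.card_fin]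


open scoped Classical in
theorem stmt12 (q n d V : ℕ) (hq : 2 ≤ q) (hn : 1 ≤ n) (hd : 2 ≤ d) (hV : 1 ≤ V)
    (hbound : ((q : ℝ) / ((q : ℝ) - 1)) * (n : ℝ) ^ (2 * d) * (numMinBoxes d V : ℝ)
        ≤ (q : ℝ) ^ V) :
    q ^ (n ^ d - 1) ≤
      Nat.card {W : (Fin d → Fin n) → Fin q //
        ∀ u v s : Fin d → ℕ, V ≤ ∏ i, s i → ¬ identicalBoxesAt n d q W u v s} := by
  classical
  set P : ((Fin d → Fin n) → Fin q) → Prop :=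
    fun W => ∀ u v s : Fin d → ℕ, V ≤ ∏ i, s i → ¬ identicalBoxesAt n d q W u v s with hP
  have hNat : Nat.card {W : (Fin d → Fin n) → Fin q // P W}
      = (Finset.univ.filter P).card := by
    rw [Nat.card_eq_fintype_card, Fintype.card_subtype]
  rw [hNat]
  have hcardI : Fintype.card (Fin d → Fin n) = n ^ d := by
    rw [Fintype.card_fun, Fintype.card_fin, Fintype.card_fin]
  have hcardW : Fintype.card ((Fin d → Fin n) → Fin q) = q ^ (n ^ d) := by
    rw [Fintype.card_fun, Fintype.card_fin, hcardI]
  have hsplit : (Finset.univ.filter P).card + (Finset.univ.filter (fun W => ¬ P W)).card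
      = q ^ (n ^ d) := by
    rw [Finset.card_filter_add_card_filter_not, Finset.card_univ, hcardW]
  by_cases hVN : V ≤ n ^ d
  · -- main case
    set F : Finset (Fin d → ℕ) := (minbox_finite d V hV).toFinset with hFdef
    have hFcard : F.card = numMinBoxes d V := by
      have h1 : Nat.card {x : Fin d → ℕ // IsMinBox d V x}
          = {x : Fin d → ℕ | IsMinBox d V x}.ncard :=
        Nat.card_coe_set_eq _
      rw [numMinBoxes, h1,
        Set.ncard_eq_toFinset_card _ (minbox_finite d V hV)]
    set T : Finset ((Fin d → Fin n) × (Fin d → Fin n) × (Fin d → ℕ)) :=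
      Finset.univ ×ˢ Finset.univ ×ˢ F with hT
    set E : ((Fin d → Fin n) × (Fin d → Fin n) × (Fin d → ℕ)) →
        Finset ((Fin d → Fin n) → Fin q) :=
      fun t => Finset.univ.filter (fun W => identicalBoxesAt n d q W
        (fun i => (t.1 i : ℕ)) (fun i => (t.2.1 i : ℕ)) t.2.2) with hE
    have hsub : Finset.univ.filter (fun W => ¬ P W) ⊆ T.biUnion E := by
      intro W hW
      rw [Finset.mem_filter] at hW
      obtain ⟨-, hW⟩ := hW
      replace hW : ¬ ∀ u v s : Fin d → ℕ, V ≤ ∏ i, s i →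
          ¬ identicalBoxesAt n d q W u v s := hW
      push_neg at hW
      obtain ⟨u, v, s, hVs, hid⟩ := hW
      obtain ⟨hne, hs1, hus, hvs, hmatch⟩ := hid
      obtain ⟨a, has, ha⟩ := exists_minbox d V s hs1 hVs
      have ha1 := ha.1
      have haV := ha.2.1
      refine Finset.mem_biUnion.mpr ⟨(fun i => ⟨u i, by have := hus i; have := hs1 i; omega⟩,
        fun i => ⟨v i, by have := hvs i; have := hs1 i; omega⟩, a), ?_, ?_⟩
      · rw [hT]
        simp only [Finset.mem_product, Finset.mem_univ, true_and, hFdef,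
          Set.Finite.mem_toFinset, Set.mem_setOf_eq]
        exact ha
      · rw [hE]
        simp only [Finset.mem_filter, Finset.mem_univ, true_and]
        refine ⟨hne, ha1, fun i => by have := hus i; have := has i; simp; omega,
          fun i => by have := hvs i; have := has i; simp; omega, ?_⟩
        intro x y off hoff hx hy
        exact hmatch x y off (fun i => lt_of_lt_of_le (hoff i) (has i)) hx hy
    have hEle : ∀ t ∈ T, (E t).card ≤ q ^ (n ^ d - V) := by
      rintro ⟨u, v, a⟩ hmemT
      have haMin : IsMinBox d V a := by
        rw [hT] at hmemT
        simp only [Finset.mem_product, Finset.mem_univ, true_and, hFdef,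
          Set.Finite.mem_toFinset, Set.mem_setOf_eq] at hmemT
        exact hmemT
      obtain ⟨-, haV, -⟩ := haMin
      rcases Finset.eq_empty_or_nonempty (E (u, v, a)) with hemp | ⟨W0, hW0⟩
      · rw [hemp]; simp
      · rw [hE] at hW0
        simp only [Finset.mem_filter, Finset.mem_univ, true_and] at hW0
        obtain ⟨hne, -, hfu, hfv, -⟩ := hW0
        obtain ⟨i0, hi0⟩ := Function.ne_iff.mp hne
        have hi0' : (u i0 : ℕ) ≠ (v i0 : ℕ) := hi0
        have hmono : q ^ (n ^ d - ∏ i, a i) ≤ q ^ (n ^ d - V) :=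
          Nat.pow_le_pow_right (by omega) (Nat.sub_le_sub_left haV _)
        rcases lt_or_gt_of_ne hi0' with hlt | hlt
        · refine le_trans (le_trans ?_ (le_refl _)) hmono
          rw [← hcardI]
          refine card_E_core n d q (fun i => (u i : ℕ)) (fun i => (v i : ℕ)) a i0
            hlt hfu hfv (E (u, v, a)) ?_
          intro W hWm
          rw [hE] at hWm
          simp only [Finset.mem_filter, Finset.mem_univ, true_and] at hWm
          exact hWm.2.2.2.2
        · refine le_trans (le_trans ?_ (le_refl _)) hmono
          rw [← hcardI]
          refine card_E_core n d q (fun i => (v i : ℕ)) (fun i => (u i : ℕ)) a i0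
            hlt hfv hfu (E (u, v, a)) ?_
          intro W hWm
          rw [hE] at hWm
          simp only [Finset.mem_filter, Finset.mem_univ, true_and] at hWm
          intro x y off hoff hx hy
          exact (hWm.2.2.2.2 y x off hoff hy hx).symm
    have hTcard : T.card = n ^ d * (n ^ d * F.card) := by
      rw [hT, Finset.card_product, Finset.card_product, Finset.card_univ, hcardI]
    have hBad : (Finset.univ.filter (fun W => ¬ P W)).card
        ≤ n ^ d * (n ^ d * F.card) * q ^ (n ^ d - V) := by
      calc (Finset.univ.filter (fun W => ¬ P W)).card ≤ (T.biUnion E).card :=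
            Finset.card_le_card hsub
        _ ≤ ∑ t ∈ T, (E t).card := Finset.card_biUnion_le
        _ ≤ T.card * q ^ (n ^ d - V) := by
            rw [← smul_eq_mul]
            exact Finset.sum_le_card_nsmul T _ _ hEle
        _ = n ^ d * (n ^ d * F.card) * q ^ (n ^ d - V) := by rw [hTcard]
    -- real arithmetic to natural bound
    have hq1R : (1 : ℝ) < (q : ℝ) := by exact_mod_cast hq
    have hNatBound : n ^ (2 * d) * numMinBoxes d V ≤ (q - 1) * q ^ (V - 1) := by
      have hpow : ((q : ℝ)) ^ V = (q : ℝ) * (q : ℝ) ^ (V - 1) := by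
        rw [← pow_succ']
        congr 1
        omega
      have hstep : ((n : ℝ)) ^ (2 * d) * (numMinBoxes d V : ℝ)
          ≤ ((q : ℝ) - 1) * (q : ℝ) ^ (V - 1) := by
        have h1 : (0 : ℝ) < (q : ℝ) - 1 := by linarith
        have h2 : (0 : ℝ) < (q : ℝ) := by linarith
        have h3 : (0 : ℝ) ≤ (q : ℝ) ^ (V - 1) := by positivity
        rw [div_mul_eq_mul_div, div_mul_eq_mul_div, div_le_iff₀ h1, hpow] at hbound
        nlinarith [hbound]
      have := hstep
      rw [show ((q : ℝ) - 1) = (((q - 1 : ℕ)) : ℝ) by push_cast [Nat.cast_sub (by omega : 1 ≤ q)]; ring] at this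
      exact_mod_cast this
    have hfinal : n ^ d * (n ^ d * F.card) * q ^ (n ^ d - V) ≤ (q - 1) * q ^ (n ^ d - 1) := by
      have h1 : n ^ d * (n ^ d * F.card) = n ^ (2 * d) * numMinBoxes d V := by
        rw [hFcard, two_mul, pow_add]; ring
      rw [h1]
      calc n ^ (2 * d) * numMinBoxes d V * q ^ (n ^ d - V)
          ≤ (q - 1) * q ^ (V - 1) * q ^ (n ^ d - V) :=
            Nat.mul_le_mul_right _ hNatBound
        _ = (q - 1) * q ^ (n ^ d - 1) := by
            rw [mul_assoc, ← pow_add]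
            congr 2
            omega
    have hBad2 : (Finset.univ.filter (fun W => ¬ P W)).card ≤ (q - 1) * q ^ (n ^ d - 1) :=
      le_trans hBad hfinal
    have hNd : 1 ≤ n ^ d := Nat.one_le_pow _ _ (by omega)
    have hqN : q ^ (n ^ d) = (q - 1) * q ^ (n ^ d - 1) + q ^ (n ^ d - 1) := by
      have : q ^ (n ^ d) = q * q ^ (n ^ d - 1) := by
        rw [← pow_succ']
        congr 1
        omega
      rw [this]
      have : q = (q - 1) + 1 := by omega
      nth_rewrite 1 [this]
      ring
    omega
  · -- V > n^d : no bad arrays at all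
    have hall : Finset.univ.filter P = Finset.univ := by
      rw [Finset.filter_eq_self]
      intro W _
      rw [hP]
      intro u v s hVs hid
      obtain ⟨-, hs1, hus, -, -⟩ := hid
      have hle : ∏ i, s i ≤ n ^ d := by
        calc ∏ i, s i ≤ ∏ _i : Fin d, n :=
              Finset.prod_le_prod' (fun i _ => by have := hus i; omega)
          _ = n ^ d := by rw [Finset.prod_const, Finset.card_univ, Fintype.card_fin]
      omega
    rw [hall, Finset.card_univ, hcardW]
    exact Nat.pow_le_pow_right (by omega) (Nat.sub_le _ _)
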